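/- For z ∈ ℂ \ (-∞, 0], the principal logarithm admits the integral representation log z = -∫_{-1}^{1} (1 - z)/((1+t) + (1-t)z) dt. -/
import Mathlib

set_option maxHeartbeats 1000000 in
theorem stmt_19 (z : ℂ) (hz : ∀ x : ℝ, x ≤ 0 → (x : ℂ) ≠ z) :
    Complex.log z = -∫ t in (-1 : ℝ)..1, (1 - z) / (((1 : ℝ) + t) + ((1 : ℝ) - t) * z) := by
  have hz0 : z ≠ 0 := fun h => hz 0 le_rfl (by simp [h])
  have hzs : 0 < z.re ∨ z.im ≠ 0 := by
    by_contra h; push_neg at h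
    obtain ⟨hre, him⟩ := h
    refine hz z.re hre ?_
    exact Complex.ext (by simp) (by simp [him])
  have key : ∀ t : ℝ, t ∈ Set.uIcc (-1:ℝ) 1 →
      (1-z) * (t:ℂ) + (1+z) ∈ Complex.slitPlane := by
    intro t ht
    rw [Set.uIcc_of_le (by norm_num)] at ht
    rw [Complex.mem_slitPlane_iff]
    have him : ((1-z)*(t:ℂ) + (1+z)).im = (1-t) * z.im := by simp; ring
    have hre : ((1-z)*(t:ℂ) + (1+z)).re = 1 + t + (1 - t) * z.re := by simp; ring
    rcases hzs with hpos | hne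
    · left
      rcases eq_or_lt_of_le ht.1 with h1 | h1
      · rw [hre, ← h1]; norm_num; linarith
      · have hnn := mul_nonneg (by linarith [ht.2] : (0:ℝ) ≤ 1 - t) hpos.le
        rw [hre]; linarith
    · rcases eq_or_lt_of_le ht.2 with h1 | h1
      · left; rw [hre, h1]; norm_num
      · right; rw [him]; exact mul_ne_zero (by linarith) hne
  have hderiv : ∀ t ∈ Set.uIcc (-1:ℝ) 1,
      HasDerivAt (fun s:ℝ => Complex.log ((1-z)*(s:ℂ)+(1+z)))
        ((1-z) / ((1-z)*(t:ℂ)+(1+z))) t := by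
    intro t ht
    have h1 : HasDerivAt (fun w:ℂ => (1-z)*w+(1+z)) (1-z) (t:ℂ) := by
      simpa using ((hasDerivAt_id (t:ℂ)).const_mul (1-z)).add_const (1+z)
    have h2 := (Complex.hasDerivAt_log (key t ht)).comp (t:ℂ) h1
    have h3 := h2.comp_ofReal
    simpa [div_eq_mul_inv, mul_comm, Function.comp] using h3
  have hcont : ContinuousOn (fun t:ℝ => (1-z) / ((1-z)*(t:ℂ)+(1+z))) (Set.uIcc (-1:ℝ) 1) := by
    apply ContinuousOn.div continuousOn_const
    · exact ((continuous_const.mul Complex.continuous_ofReal).add continuous_const).continuousOn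
    · intro t ht; exact Complex.slitPlane_ne_zero (key t ht)
  have hint := intervalIntegral.integral_eq_sub_of_hasDerivAt hderiv
    (hcont.intervalIntegrable)
  have hfun : (fun t : ℝ => (1 - z) / ((((1:ℝ):ℂ) + (t:ℂ)) + ((((1:ℝ):ℂ)) - (t:ℂ)) * z))
      = fun t : ℝ => (1-z) / ((1-z)*(t:ℂ)+(1+z)) := by
    funext t; congr 1; push_cast; ring
  rw [intervalIntegral.integral_congr (fun t _ => congrFun hfun t), hint]
  have e1 : (1-z)*((1:ℝ):ℂ)+(1+z) = 2 := by push_cast; ring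
  have e2 : (1-z)*((-1:ℝ):ℂ)+(1+z) = ((2:ℝ):ℂ) * z := by push_cast; ring
  rw [e1, e2, Complex.log_ofReal_mul (by norm_num) hz0]
  have h2l : Complex.log 2 = ((Real.log 2 : ℝ) : ℂ) := by
    rw [Complex.ofReal_log (by norm_num)]; norm_num
  rw [h2l]
  ring
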